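/- For all positive reals a and b, (P5 + 2·G)/3 ≤ (P6 + 2·P4)/3, i.e. P6 + 2·P4 − P5 − 2·G ≥ 0, where P5 = ((a+b)/(√a+√b))², G = √(ab), P6 = (a²+b²)/(a+b), and P4 = 4ab/(√a+√b)². -/

import Mathlib

theorem stmt_6 (a b : ℝ) (ha : 0 < a) (hb : 0 < b) :
    let P5 := ((a+b)/(Real.sqrt a + Real.sqrt b))^2
    let G := Real.sqrt (a*b)
    let P6 := (a^2+b^2)/(a+b)
    let P4 := 4*a*b/(Real.sqrt a + Real.sqrt b)^2
    (P5 + 2*G)/3 ≤ (P6 + 2*P4)/3 := by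
  intro P5 G P6 P4
  set s := Real.sqrt a with hsdef
  set t := Real.sqrt b with htdef
  have hs : 0 < s := Real.sqrt_pos.mpr ha
  have ht : 0 < t := Real.sqrt_pos.mpr hb
  have hsa : s^2 = a := Real.sq_sqrt ha.le
  have htb : t^2 = b := Real.sq_sqrt hb.le
  have hG : G = s * t := by
    simp only [G, hsdef, htdef]
    rw [Real.sqrt_mul ha.le]
  have hst : 0 < s + t := by linarith
  have hst2 : 0 < (s + t)^2 := by positivity
  have hab : 0 < a + b := by linarith
  simp only [P5, P6, P4, hG]
  clear_value s t
  clear hsdef htdef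
  rw [← hsa, ← htb, Real.sqrt_sq hs.le, Real.sqrt_sq ht.le]
  have h1 : (s^2 + t^2) > 0 := by positivity
  rw [div_le_div_iff₀ (by norm_num : (0:ℝ) < 3) (by norm_num : (0:ℝ) < 3), div_pow]
  rw [div_add' _ _ _ (ne_of_gt hst2), div_mul_eq_mul_div]
  rw [show ((s^2)^2+(t^2)^2)/(s^2+t^2) + 2*(4*s^2*t^2/(s+t)^2)
      = (((s^2)^2+(t^2)^2)*(s+t)^2 + 8*s^2*t^2*(s^2+t^2))/((s^2+t^2)*(s+t)^2) by
    field_simp; ring]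
  rw [div_mul_eq_mul_div, div_le_div_iff₀ (by positivity) (by positivity)]
  nlinarith [sq_nonneg (s - t), sq_nonneg (s^2 - t^2), sq_nonneg (s + t), sq_nonneg (s*t),
    mul_pos hs ht, sq_nonneg (s^2 + t^2 - 2*s*t), sq_nonneg ((s-t)^2*(s+t)),
    sq_nonneg (s^3 - t^3), sq_nonneg (s^3 + t^3 - s*t*(s+t)), mul_pos (mul_pos hs ht) hst]
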